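/- arXiv:1503.01506 — 3 statements merged into one kernel-verified Lean document; each statement's English description precedes it below -/
import Mathlib

section
/- If Z ∈ ℂ^{n×n}, s ∈ ℂ^n, V₀ > 0 and 4‖Z‖*_2‖s‖_2 ≤ V₀², then the map G(f) = −(1/V₀²)·diag(f+s)·Z·conj(f+s) maps the closed ball B = {f : ‖f‖_∞ ≤ ‖s‖_2} into itself. -/
open Matrix

/-- If `f` lies in `B' = {f : |f_h| ≤ |s_h| for all h}` and `4‖Z‖₂*‖s‖₂ ≤ V₀²`,
then `G(f) = -(1/V₀²) diag(f+s) Z conj(f+s)` lies in the ball `{g : ‖g‖_∞ ≤ ‖s‖_∞}`. -/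
theorem stmt_3 (n : ℕ) (Z : Matrix (Fin n) (Fin n) ℂ) (s : Fin n → ℂ) (V₀ : ℝ)
    (hV : 0 < V₀)
    (hcrit : 4 * (⨆ h, Real.sqrt (∑ j, (‖Z h j‖) ^ 2)) *
        Real.sqrt (∑ k, (‖s k‖) ^ 2) ≤ V₀ ^ 2)
    (f : Fin n → ℂ) (hf : ∀ h, ‖f h‖ ≤ ‖s h‖) :
    ∀ h, ‖
        (-(1 / (V₀ : ℂ) ^ 2) * (f h + s h) * ∑ j, Z h j * (starRingEnd ℂ) (f j + s j))‖ ≤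
      ⨆ k, ‖s k‖ := by
  intro h
  haveI : Nonempty (Fin n) := ⟨h⟩
  set A := ⨆ h, Real.sqrt (∑ j, (‖Z h j‖) ^ 2) with hA
  set S := Real.sqrt (∑ k, (‖s k‖) ^ 2) with hSdef
  have hS0 : 0 ≤ S := Real.sqrt_nonneg _
  have hA0 : 0 ≤ A := le_ciSup_of_le ((Set.finite_range _).bddAbove) h (Real.sqrt_nonneg _)
  -- each |s k| ≤ S
  have hsS : ∀ k, ‖s k‖ ≤ S := by
    intro k
    rw [hSdef]
    have : (‖s k‖) ^ 2 ≤ ∑ j, (‖s j‖) ^ 2 :=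
      Finset.single_le_sum (f := fun j => (‖s j‖) ^ 2) (fun j _ => sq_nonneg _) (Finset.mem_univ k)
    calc ‖s k‖ = Real.sqrt ((‖s k‖) ^ 2) := by
          rw [Real.sqrt_sq (norm_nonneg _)]
      _ ≤ _ := Real.sqrt_le_sqrt this
  -- row bound
  have hrow : Real.sqrt (∑ j, (‖Z h j‖) ^ 2) ≤ A :=
    le_ciSup (f := fun h => Real.sqrt (∑ j, (‖Z h j‖) ^ 2)) ((Set.finite_range _).bddAbove) h
  -- Cauchy-Schwarz
  have cs : ‖∑ j, Z h j * (starRingEnd ℂ) (f j + s j)‖ ≤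
      Real.sqrt (∑ j, (‖Z h j‖) ^ 2) *
      Real.sqrt (∑ j, (‖f j + s j‖) ^ 2) := by
    calc ‖∑ j, Z h j * (starRingEnd ℂ) (f j + s j)‖
        ≤ ∑ j, ‖Z h j * (starRingEnd ℂ) (f j + s j)‖ :=
          norm_sum_le _ _
      _ = ∑ j, ‖Z h j‖ * ‖f j + s j‖ := by
          refine Finset.sum_congr rfl fun j _ => ?_
          rw [norm_mul, Complex.norm_conj]
      _ ≤ Real.sqrt (∑ j, (‖Z h j‖) ^ 2) *
          Real.sqrt (∑ j, (‖f j + s j‖) ^ 2) :=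
          Real.sum_mul_le_sqrt_mul_sqrt _ _ _
  -- ‖f+s‖₂ ≤ 2S
  have h2S : Real.sqrt (∑ j, (‖f j + s j‖) ^ 2) ≤ 2 * S := by
    have hle : ∑ j, (‖f j + s j‖) ^ 2 ≤ ∑ j, (2 * ‖s j‖) ^ 2 := by
      apply Finset.sum_le_sum
      intro j _
      have h1 : ‖f j + s j‖ ≤ 2 * ‖s j‖ := by
        calc ‖f j + s j‖ ≤ ‖f j‖ + ‖s j‖ :=
              norm_add_le _ _
          _ ≤ 2 * ‖s j‖ := by have := hf j; linarith
      exact pow_le_pow_left₀ (norm_nonneg _) h1 2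
    calc Real.sqrt (∑ j, (‖f j + s j‖) ^ 2)
        ≤ Real.sqrt (∑ j, (2 * ‖s j‖) ^ 2) := Real.sqrt_le_sqrt hle
      _ = 2 * S := by
          have e : ∑ j, (2 * ‖s j‖) ^ 2 = 4 * ∑ k, (‖s k‖) ^ 2 := by
            rw [Finset.mul_sum]; exact Finset.sum_congr rfl fun j _ => by ring
          rw [e, Real.sqrt_mul (by norm_num : (0:ℝ) ≤ 4), hSdef,
            show (4:ℝ) = 2 ^ 2 by norm_num, Real.sqrt_sq (by norm_num : (0:ℝ) ≤ 2)]
  have hfs : ‖f h + s h‖ ≤ 2 * ‖s h‖ := by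
    calc ‖f h + s h‖ ≤ ‖f h‖ + ‖s h‖ :=
          norm_add_le _ _
      _ ≤ 2 * ‖s h‖ := by have := hf h; linarith
  have habs1 : ‖-(1 / (V₀ : ℂ) ^ 2)‖ = 1 / V₀ ^ 2 := by
    rw [norm_neg, norm_div, norm_pow, norm_one, Complex.norm_real, Real.norm_eq_abs, abs_of_pos hV]
  have key : ‖
      (-(1 / (V₀ : ℂ) ^ 2) * (f h + s h) * ∑ j, Z h j * (starRingEnd ℂ) (f j + s j))‖ ≤
      ‖s h‖ := by
    rw [norm_mul, norm_mul, habs1]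
    have hsum : ‖∑ j, Z h j * (starRingEnd ℂ) (f j + s j)‖ ≤ A * (2 * S) := by
      refine cs.trans ?_
      exact mul_le_mul hrow h2S (Real.sqrt_nonneg _) hA0
    calc 1 / V₀ ^ 2 * ‖f h + s h‖ *
          ‖∑ j, Z h j * (starRingEnd ℂ) (f j + s j)‖
        ≤ 1 / V₀ ^ 2 * (2 * ‖s h‖) * (A * (2 * S)) := by
          apply mul_le_mul
          · apply mul_le_mul_of_nonneg_left hfs (by positivity)
          · exact hsum
          · exact norm_nonneg _
          · positivity
      _ = (4 * A * S / V₀ ^ 2) * ‖s h‖ := by ring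
      _ ≤ 1 * ‖s h‖ := by
          apply mul_le_mul_of_nonneg_right _ (norm_nonneg _)
          rw [div_le_one (by positivity)]
          exact hcrit
      _ = ‖s h‖ := one_mul _
  exact key.trans (le_ciSup (f := fun k => ‖s k‖) ((Set.finite_range _).bddAbove) h)
end

section
/- Suppose the power flow fixed-point equation f = G(f) with G(f) = −(1/V₀²)·diag(f+s)·Z·conj(f+s) has a solution f. Then the voltages v = V₀·𝟙 + Z·conj((f+s)/V₀) and currents i = conj((f+s)/V₀)... satisfy the power flow equations v_h·conj(i_h) = s_h for all h, i.e., any fixed point of G yields a solution of the power flow equations. -/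
open Matrix

theorem stmt_5 (n : ℕ) (Z : Matrix (Fin n) (Fin n) ℂ) (s : Fin n → ℂ) (V₀ : ℝ)
    (hV : 0 < V₀) (hZ : IsUnit Z.det) (f : Fin n → ℂ)
    (hfix : ∀ h, f h = -(1 / (V₀ : ℂ) ^ 2) * (f h + s h) *
        ∑ j, Z h j * (starRingEnd ℂ) (f j + s j)) :
    ∀ h, ((V₀ : ℂ) + Z.mulVec (fun j => (starRingEnd ℂ) (f j + s j) / (V₀ : ℂ)) h) *
        (starRingEnd ℂ) ((starRingEnd ℂ) (f h + s h) / (V₀ : ℂ)) = s h := by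
  intro h
  have hV0 : (V₀ : ℂ) ≠ 0 := by exact_mod_cast hV.ne'
  have hm : Z.mulVec (fun j => (starRingEnd ℂ) (f j + s j) / (V₀ : ℂ)) h
      = (∑ j, Z h j * (starRingEnd ℂ) (f j + s j)) / (V₀ : ℂ) := by
    simp [Matrix.mulVec, dotProduct, Finset.sum_div, mul_div_assoc]
  rw [hm, map_div₀, Complex.conj_conj, Complex.conj_ofReal]
  have := hfix h
  field_simp
  field_simp at this
  linear_combination this
end

section
/- Let Z ∈ ℂ^{n×n} have nonzero columns and V₀ > 0. The rhombus region {s : Σ_k |s_k|/s_k^max ≤ 1} is contained in the set P = {s : ∃ diagonal Λ with positive entries such that 4‖ZΛ‖*_∞‖Λ^{-1}s‖_1 ≤ V₀²}; combined with the reverse containment, P equals the rhombus, i.e., the union of all rescaled 1-norm certificate regions is exactly {s : Σ_k |s_k|/s_k^max ≤ 1} with s_k^max = V₀²/(4 max_h|Z_{hk}|). -/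
open Matrix

theorem stmt_18 (n : ℕ) [NeZero n] (Z : Matrix (Fin n) (Fin n) ℂ) (V₀ : ℝ) (hV : 0 < V₀)
    (hcol : ∀ k, ∃ h, Z h k ≠ 0) :
    {s : Fin n → ℂ |
        ∑ k, Norm.norm (s k) / (V₀ ^ 2 / (4 * ⨆ h, Norm.norm (Z h k))) ≤ 1} =
      {s : Fin n → ℂ | ∃ lam : Fin n → ℝ, (∀ k, 0 < lam k) ∧
        4 * (⨆ h, ⨆ k, Norm.norm
            ((Z * Matrix.diagonal (fun k => ((lam k : ℝ) : ℂ))) h k)) *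
          (∑ k, Norm.norm
            ((Matrix.diagonal (fun k => (((lam k)⁻¹ : ℝ) : ℂ))).mulVec s k)) ≤ V₀ ^ 2} := by
  have hle : ∀ h k, Norm.norm (Z h k) ≤ ⨆ h, Norm.norm (Z h k) := fun h k =>
    le_ciSup (f := fun h => Norm.norm (Z h k)) (Set.Finite.bddAbove (Set.finite_range _)) h
  have hM : ∀ k, 0 < ⨆ h, Norm.norm (Z h k) := by
    intro k
    obtain ⟨h, hz⟩ := hcol k
    exact lt_of_lt_of_le ((norm_pos_iff.2 hz)) (hle h k)
  set M : Fin n → ℝ := fun k => ⨆ h, Norm.norm (Z h k) with hMdef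
  have hV2 : (0:ℝ) < V₀ ^ 2 := by positivity
  ext s
  simp only [Set.mem_setOf_eq]
  have hterm : ∀ k, Norm.norm (s k) / (V₀ ^ 2 / (4 * M k))
      = 4 * M k * Norm.norm (s k) / V₀ ^ 2 := by
    intro k
    rw [div_div_eq_mul_div]
    ring
  constructor
  · intro hs
    refine ⟨fun k => (M k)⁻¹, fun k => inv_pos.2 (hM k), ?_⟩
    have hS : (⨆ h, ⨆ k, Norm.norm
        ((Z * diagonal (fun k => (((M k)⁻¹ : ℝ) : ℂ))) h k)) ≤ 1 := by
      apply ciSup_le; intro h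
      apply ciSup_le; intro k
      rw [Matrix.mul_diagonal, norm_mul, Complex.norm_real, Real.norm_eq_abs,
        abs_of_pos (inv_pos.2 (hM k))]
      rw [mul_inv_le_iff₀ (hM k), one_mul]
      exact hle h k
    have hT : (∑ k, Norm.norm
        ((diagonal (fun k => ((((fun k => (M k)⁻¹) k)⁻¹ : ℝ) : ℂ))).mulVec s k))
        = ∑ k, M k * Norm.norm (s k) := by
      apply Finset.sum_congr rfl
      intro k _
      rw [Matrix.mulVec_diagonal, norm_mul, Complex.norm_real, Real.norm_eq_abs, inv_inv,
        abs_of_pos (hM k)]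
    have hT0 : (0:ℝ) ≤ ∑ k, M k * Norm.norm (s k) := by
      apply Finset.sum_nonneg
      intro k _
      exact mul_nonneg (hM k).le ((norm_nonneg _))
    have h1 : ∑ k, 4 * M k * Norm.norm (s k) / V₀ ^ 2 ≤ 1 := by
      calc ∑ k, 4 * M k * Norm.norm (s k) / V₀ ^ 2
          = ∑ k, Norm.norm (s k) / (V₀ ^ 2 / (4 * M k)) :=
            (Finset.sum_congr rfl fun k _ => (hterm k)).symm
        _ ≤ 1 := hs
    rw [← Finset.sum_div, div_le_one hV2] at h1
    have h2 : ∑ k, 4 * M k * Norm.norm (s k) = 4 * ∑ k, M k * Norm.norm (s k) := by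
      rw [Finset.mul_sum]
      exact Finset.sum_congr rfl fun k _ => by ring
    rw [h2] at h1
    calc 4 * (⨆ h, ⨆ k, Norm.norm
          ((Z * diagonal (fun k => (((M k)⁻¹ : ℝ) : ℂ))) h k)) *
          (∑ k, Norm.norm
            ((diagonal (fun k => ((((fun k => (M k)⁻¹) k)⁻¹ : ℝ) : ℂ))).mulVec s k))
        ≤ 4 * 1 * (∑ k, M k * Norm.norm (s k)) := by
          rw [hT]; gcongr
        _ ≤ V₀ ^ 2 := by linarith
  · rintro ⟨lam, hlam, hcert⟩
    set S := ⨆ h, ⨆ k, Norm.norm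
        ((Z * diagonal (fun k => ((lam k : ℝ) : ℂ))) h k) with hSdef
    have hSk : ∀ h k, Norm.norm (Z h k) * lam k ≤ S := by
      intro h k
      have h1 : Norm.norm ((Z * diagonal (fun k => ((lam k : ℝ) : ℂ))) h k)
          = Norm.norm (Z h k) * lam k := by
        rw [Matrix.mul_diagonal, norm_mul, Complex.norm_real, Real.norm_eq_abs, abs_of_pos (hlam k)]
      rw [← h1]
      refine le_trans (le_ciSup (Set.Finite.bddAbove (Set.finite_range
        (fun k => Norm.norm ((Z * diagonal (fun k => ((lam k : ℝ) : ℂ))) h k)))) k) ?_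
      exact le_ciSup (Set.Finite.bddAbove (Set.finite_range
        (fun h => ⨆ k, Norm.norm ((Z * diagonal (fun k => ((lam k : ℝ) : ℂ))) h k)))) h
    have hT : (∑ k, Norm.norm
        ((diagonal (fun k => (((lam k)⁻¹ : ℝ) : ℂ))).mulVec s k))
        = ∑ k, Norm.norm (s k) / lam k := by
      apply Finset.sum_congr rfl
      intro k _
      rw [Matrix.mulVec_diagonal, norm_mul, Complex.norm_real, Real.norm_eq_abs,
        abs_of_pos (inv_pos.2 (hlam k))]
      rw [mul_comm, div_eq_mul_inv]
    rw [hT] at hcert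
    calc ∑ k, Norm.norm (s k) / (V₀ ^ 2 / (4 * M k))
        = ∑ k, 4 * M k * Norm.norm (s k) / V₀ ^ 2 :=
          Finset.sum_congr rfl (fun k _ => hterm k)
      _ ≤ ∑ k, 4 * S * (Norm.norm (s k) / lam k) / V₀ ^ 2 := by
          apply Finset.sum_le_sum
          intro k _
          have hMk : M k ≤ S / lam k :=
            ciSup_le fun h => (le_div_iff₀ (hlam k)).2 (hSk h k)
          calc 4 * M k * Norm.norm (s k) / V₀ ^ 2
              ≤ 4 * (S / lam k) * Norm.norm (s k) / V₀ ^ 2 := by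
                gcongr
            _ = 4 * S * (Norm.norm (s k) / lam k) / V₀ ^ 2 := by ring
      _ = 4 * S * (∑ k, Norm.norm (s k) / lam k) / V₀ ^ 2 := by
          rw [← Finset.sum_div, ← Finset.mul_sum]
      _ ≤ 1 := by
          rw [div_le_one hV2]; exact hcert
end
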